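/- Let I ⊆ S be a support-2 monomial ideal and suppose {x_i, x_j} is an edge of G(I) such that every minimal vertex cover of G(I) contains exactly one of x_i, x_j. If some minimal generator u of I is divisible by x_i^{ν_{i,j}+1} or by x_j^{ν_{j,i}+1}, where ν_{i,j} (resp. ν_{j,i}) is the minimum exponent of x_i (resp. x_j) among generators supported on {x_i,x_j}, then I^{(1)} ≠ I, i.e., I has an embedded associated prime. -/

import Mathlib

set_option synthInstance.maxHeartbeats 1000000
set_option maxHeartbeats 1000000

open MvPolynomial

section Defs

variable {K : Type*} [Field K] {σ : Type*}

/-- `I` is a monomial ideal. -/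
def IsMonomialIdeal (I : Ideal (MvPolynomial σ K)) : Prop :=
  ∃ A : Set (σ →₀ ℕ), I = Ideal.span ((fun a => (monomial a (1 : K) : MvPolynomial σ K)) '' A)

/-- Exponent vectors of the minimal monomial generators of `I`. -/
def minGens (I : Ideal (MvPolynomial σ K)) : Set (σ →₀ ℕ) :=
  {a | (monomial a (1 : K) : MvPolynomial σ K) ∈ I ∧
    ∀ b : σ →₀ ℕ, (monomial b (1 : K) : MvPolynomial σ K) ∈ I → b ≤ a → b = a}

/-- A support-2 monomial ideal: every minimal monomial generator is supported
on exactly two variables. -/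
def IsSupportTwo (I : Ideal (MvPolynomial σ K)) : Prop :=
  ∀ a ∈ minGens I, a.support.card = 2

variable [DecidableEq σ]

/-- Minimal monomial generators of `I` supported on `{i, j}`. -/
def supportedOn (I : Ideal (MvPolynomial σ K)) (i j : σ) : Set (σ →₀ ℕ) :=
  {a | a ∈ minGens I ∧ a.support = {i, j}}

/-- `ν_{i,j}`: the minimum exponent of `x_i` among the minimal generators of `I`
supported on `{i, j}`. -/
noncomputable def nuExp (I : Ideal (MvPolynomial σ K)) (i j : σ) : ℕ :=
  sInf ((fun a => a i) '' supportedOn I i j)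

/-- `μ_{i,j}`: the maximum exponent of `x_i` among the minimal generators of `I`
supported on `{i, j}`. -/
noncomputable def muExp (I : Ideal (MvPolynomial σ K)) (i j : σ) : ℕ :=
  sSup ((fun a => a i) '' supportedOn I i j)

/-- The underlying simple graph `G(I)` of a support-2 monomial ideal. -/
def underGraph (I : Ideal (MvPolynomial σ K)) : SimpleGraph σ where
  Adj i j := i ≠ j ∧ (supportedOn I i j).Nonempty
  symm := by
    constructor
    rintro i j ⟨hij, a, hmin, hs⟩
    exact ⟨hij.symm, a, hmin, by rw [hs, Finset.pair_comm]⟩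
  loopless := ⟨fun i h => h.1 rfl⟩

end Defs

section Symbolic

variable {R : Type*} [CommRing R]

/-- The component of `I` at a prime `P`, namely `I S_P ∩ S`. -/
noncomputable def localizedComponent (I P : Ideal R) (hP : P.IsPrime) : Ideal R :=
  letI := hP
  (I.map (algebraMap R (Localization.AtPrime P))).comap
    (algebraMap R (Localization.AtPrime P))

/-- The `s`-th symbolic power `I^{(s)} = ⋂_{P ∈ MinAss(I)} (I^s S_P ∩ S)`. -/
noncomputable def symbolicPower (I : Ideal R) (s : ℕ) : Ideal R :=
  ⨅ P : I.minimalPrimes, localizedComponent (I ^ s) P.1 P.2.1.1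

/-- A Simis ideal: `I^{(s)} = I^s` for all `s ≥ 1`. -/
def IsSimis (I : Ideal R) : Prop := ∀ s : ℕ, 1 ≤ s → symbolicPower I s = I ^ s

/-- `I` has no embedded associated primes. -/
def NoEmbeddedPrimes (I : Ideal R) : Prop :=
  ∀ P ∈ associatedPrimes R (R ⧸ I), P ∈ I.minimalPrimes

end Symbolic

section Decomp

variable {K : Type*} [Field K] {σ : Type*}

/-- An irreducible monomial ideal: generated by pure powers of variables. -/
def IsIrredMonomialIdeal (Q : Ideal (MvPolynomial σ K)) : Prop :=
  ∃ (t : Finset σ) (e : σ → ℕ), (∀ i ∈ t, 1 ≤ e i) ∧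
    Q = Ideal.span ((fun i => (X i : MvPolynomial σ K) ^ e i) '' t)

/-- `I` has a minimal (irredundant, distinct radicals) irreducible decomposition. -/
def HasMinimalIrredDecomp (I : Ideal (MvPolynomial σ K)) : Prop :=
  ∃ (r : ℕ) (Q : Fin r → Ideal (MvPolynomial σ K)),
    (∀ k, IsIrredMonomialIdeal (Q k)) ∧ I = ⨅ k, Q k ∧
    (∀ k, (⨅ l ∈ ({k}ᶜ : Set (Fin r)), Q l) ≠ I) ∧
    (∀ k l, k ≠ l → (Q k).radical ≠ (Q l).radical)

/-- The ideal obtained from `J` by the standard linear weighting `x_i ↦ x_i^{d_i}`. -/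
noncomputable def weightedIdeal (d : σ → ℕ) (J : Ideal (MvPolynomial σ K)) : Ideal (MvPolynomial σ K) :=
  Ideal.span {m | ∃ a ∈ minGens J, ∃ b : σ →₀ ℕ,
    (∀ i, b i = d i * a i) ∧ m = (monomial b (1 : K) : MvPolynomial σ K)}

/-- `I` has a standard linear weighting: there are `d_i ≥ 1` such that every
minimal generator supported on `{i,j}` is `x_i^{d_i} x_j^{d_j}`. -/
def HasStdWeighting (I : Ideal (MvPolynomial σ K)) : Prop :=
  ∃ d : σ → ℕ, (∀ i, 1 ≤ d i) ∧ ∀ a ∈ minGens I, ∀ i ∈ a.support, a i = d i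

variable (K) in
/-- The edge ideal of a simple graph. -/
noncomputable def edgeIdeal (G : SimpleGraph σ) : Ideal (MvPolynomial σ K) :=
  Ideal.span {m | ∃ i j, G.Adj i j ∧ m = (X i * X j : MvPolynomial σ K)}

end Decomp

section Graph

variable {σ : Type*}

/-- A vertex cover of a simple graph. -/
def IsVertexCover (G : SimpleGraph σ) (C : Set σ) : Prop :=
  ∀ ⦃i j⦄, G.Adj i j → i ∈ C ∨ j ∈ C

/-- A minimal vertex cover of a simple graph. -/
def IsMinimalVertexCover (G : SimpleGraph σ) (C : Set σ) : Prop :=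
  IsVertexCover G C ∧ ∀ D ⊆ C, IsVertexCover G D → D = C

end Graph

section CM

variable {K : Type*} [Field K] {σ : Type*}

/-- The depth of `S/I` with respect to the irrelevant maximal ideal
`⟨x_1, …, x_n⟩`: the supremum of lengths of regular sequences on `S/I`
consisting of elements of that ideal. -/
noncomputable def quotDepth (I : Ideal (MvPolynomial σ K)) : ℕ∞ :=
  sSup {n : ℕ∞ | ∃ rs : List (MvPolynomial σ K), (rs.length : ℕ∞) = n ∧
    (∀ r ∈ rs, r ∈ Ideal.span (Set.range (X : σ → MvPolynomial σ K))) ∧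
    RingTheory.Sequence.IsRegular (MvPolynomial σ K ⧸ I)
      (rs.map (Ideal.Quotient.mk I))}

/-- `S/I` is Cohen–Macaulay: depth equals Krull dimension. -/
def IsCohenMacaulayQuot (I : Ideal (MvPolynomial σ K)) : Prop :=
  (quotDepth I : WithBot ℕ∞) = ringKrullDim (MvPolynomial σ K ⧸ I)

/-- The height of a prime ideal, as the Krull dimension of the localization. -/
noncomputable def primeHeight' {R : Type*} [CommRing R] (P : Ideal R) (hP : P.IsPrime) :
    WithBot ℕ∞ :=
  letI := hP
  ringKrullDim (Localization.AtPrime P)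

/-- `I` is unmixed: all associated primes of `S/I` have the same height. -/
def IsUnmixed {R : Type*} [CommRing R] (I : Ideal R) : Prop :=
  ∀ P, ∀ hP : P ∈ associatedPrimes R (R ⧸ I), ∀ Q, ∀ hQ : Q ∈ associatedPrimes R (R ⧸ I),
    primeHeight' P hP.1 = primeHeight' Q hQ.1

end CM

section AuxProof

variable {K : Type*} [Field K] {n : ℕ}

private lemma aux_monomial_mul (a b : Fin n →₀ ℕ) :
    (monomial a (1:K) : MvPolynomial (Fin n) K) * monomial b 1 = monomial (a + b) 1 := by
  rw [MvPolynomial.monomial_mul, one_mul]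

private lemma aux_mem_of_le {I : Ideal (MvPolynomial (Fin n) K)} {a b : Fin n →₀ ℕ}
    (hab : a ≤ b) (ha : (monomial a (1:K) : MvPolynomial (Fin n) K) ∈ I) :
    (monomial b (1:K) : MvPolynomial (Fin n) K) ∈ I := by
  have h : b - a + a = b := tsub_add_cancel_of_le hab
  have hb : (monomial b (1:K) : MvPolynomial (Fin n) K)
      = monomial (b - a) 1 * monomial a 1 := by rw [aux_monomial_mul, h]
  rw [hb]
  exact Ideal.mul_mem_left _ _ ha

private lemma aux_exists_minGen {I : Ideal (MvPolynomial (Fin n) K)} {m : Fin n →₀ ℕ}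
    (h : (monomial m (1:K) : MvPolynomial (Fin n) K) ∈ I) :
    ∃ b ∈ minGens I, b ≤ m := by
  classical
  obtain ⟨b, hbT, hmin⟩ := (wellFounded_lt (α := Fin n →₀ ℕ)).has_min
    {b | (monomial b (1:K) : MvPolynomial (Fin n) K) ∈ I ∧ b ≤ m} ⟨m, h, le_refl m⟩
  refine ⟨b, ⟨hbT.1, fun c hc hcb => ?_⟩, hbT.2⟩
  by_contra hne
  exact hmin c ⟨hc, hcb.trans hbT.2⟩ (lt_of_le_of_ne hcb hne)

private lemma aux_span_eq_ker (C : Set (Fin n)) [DecidablePred (· ∈ C)] :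
    Ideal.span ((fun k => (X k : MvPolynomial (Fin n) K)) '' C)
      = RingHom.ker (aeval (R := K)
          (fun k => if k ∈ C then 0 else (X k : MvPolynomial (Fin n) K))) := by
  set φ := aeval (R := K) (fun k => if k ∈ C then 0 else (X k : MvPolynomial (Fin n) K))
  apply le_antisymm
  · rw [Ideal.span_le]
    rintro _ ⟨k, hk, rfl⟩
    simp [φ, RingHom.mem_ker, hk]
  · intro p hp
    have key : ∀ q : MvPolynomial (Fin n) K,
        q - φ q ∈ Ideal.span ((fun k => (X k : MvPolynomial (Fin n) K)) '' C) := by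
      intro q
      induction q using MvPolynomial.induction_on with
      | C a =>
        simp only [φ, aeval_C, MvPolynomial.algebraMap_eq, sub_self]
        exact zero_mem _
      | add p q hp hq =>
        have h : (p + q) - φ (p + q) = (p - φ p) + (q - φ q) := by
          rw [map_add]; ring
        rw [h]; exact add_mem hp hq
      | mul_X p k hp =>
        rw [map_mul]
        have hX : φ (X k) = if k ∈ C then 0 else X k := aeval_X _ _
        by_cases hk : k ∈ C
        · rw [hX, if_pos hk, mul_zero, sub_zero]
          exact Ideal.mul_mem_left _ _ (Ideal.subset_span ⟨k, hk, rfl⟩)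
        · rw [hX, if_neg hk]
          have h : p * X k - φ p * X k = (p - φ p) * X k := by ring
          rw [h]
          exact Ideal.mul_mem_right _ _ hp
    have h2 := key p
    rw [RingHom.mem_ker] at hp
    rwa [hp, sub_zero] at h2

private lemma aux_span_isPrime (C : Set (Fin n)) :
    (Ideal.span ((fun k => (X k : MvPolynomial (Fin n) K)) '' C)).IsPrime := by
  classical
  rw [aux_span_eq_ker]
  exact RingHom.ker_isPrime _

private lemma aux_X_mem_span_iff (C : Set (Fin n)) (k : Fin n) :
    (X k : MvPolynomial (Fin n) K) ∈
      Ideal.span ((fun k => (X k : MvPolynomial (Fin n) K)) '' C) ↔ k ∈ C := by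
  classical
  rw [aux_span_eq_ker, RingHom.mem_ker, aeval_X]
  split_ifs with h
  · simp [h]
  · simp [X_ne_zero, h]

private lemma aux_monomial_mem_of_X_mem {J : Ideal (MvPolynomial (Fin n) K)}
    {a : Fin n →₀ ℕ} {k : Fin n}
    (hk : 1 ≤ a k) (hX : (X k : MvPolynomial (Fin n) K) ∈ J) :
    (monomial a (1:K) : MvPolynomial (Fin n) K) ∈ J := by
  have hle : Finsupp.single k 1 ≤ a := Finsupp.single_le_iff.mpr hk
  have h : (monomial a (1:K) : MvPolynomial (Fin n) K)
      = monomial (a - Finsupp.single k 1) 1 * X k := by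
    show _ = _ * monomial (Finsupp.single k 1) 1
    rw [aux_monomial_mul, tsub_add_cancel_of_le hle]
  rw [h]
  exact Ideal.mul_mem_left _ _ hX

private lemma aux_mem_localizedComponent {I P : Ideal (MvPolynomial (Fin n) K)}
    (hP : P.IsPrime) {s f : MvPolynomial (Fin n) K} (hs : s ∉ P) (hsf : s * f ∈ I) :
    f ∈ localizedComponent I P hP := by
  letI := hP
  unfold localizedComponent
  rw [Ideal.mem_comap]
  have hu : IsUnit (algebraMap (MvPolynomial (Fin n) K) (Localization.AtPrime P) s) :=
    IsLocalization.map_units (M := P.primeCompl) _ ⟨s, hs⟩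
  rw [← Ideal.unit_mul_mem_iff_mem _ hu, ← map_mul]
  exact Ideal.mem_map_of_mem _ hsf

private lemma aux_key (I : Ideal (MvPolynomial (Fin n) K))
    (hmon : IsMonomialIdeal I) (h2 : IsSupportTwo I) (i j : Fin n)
    (hedge : (underGraph I).Adj i j)
    (hcov : ∀ C : Set (Fin n), IsMinimalVertexCover (underGraph I) C →
      Xor' (i ∈ C) (j ∈ C))
    (u : Fin n →₀ ℕ) (hu : u ∈ minGens I)
    (hdiv : nuExp I i j + 1 ≤ u i) :
    symbolicPower I 1 ≠ I := by
  classical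
  obtain ⟨hij, hne⟩ := hedge
  have hνmem : nuExp I i j ∈ (fun a => a i) '' supportedOn I i j :=
    Nat.sInf_mem (hne.image _)
  obtain ⟨a, ha, hai⟩ := hνmem
  set ν := nuExp I i j with hνdef
  have hai' : a i = ν := hai
  set m : Fin n →₀ ℕ := u.update i ν with hmdef
  have hmi : m i = ν := by simp [hmdef]
  have hmk : ∀ k, k ≠ i → m k = u k := by
    intro k hk
    simp [hmdef, Finsupp.coe_update, Function.update_of_ne hk]
  -- m is not in I
  have hmI : (monomial m (1:K) : MvPolynomial (Fin n) K) ∉ I := by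
    intro hmem
    obtain ⟨b, hb, hbm⟩ := aux_exists_minGen hmem
    have hbu : b ≤ u := by
      rw [Finsupp.le_def]
      intro k
      by_cases hk : k = i
      · subst hk
        have h1 := Finsupp.le_def.mp hbm k
        rw [hmi] at h1
        omega
      · have h1 := Finsupp.le_def.mp hbm k
        rwa [hmk k hk] at h1
    have hbe : b = u := hu.2 b hb.1 hbu
    have h1 := Finsupp.le_def.mp hbm i
    rw [hmi, hbe] at h1
    omega
  -- m is in the symbolic power
  have hms : (monomial m (1:K) : MvPolynomial (Fin n) K) ∈ symbolicPower I 1 := by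
    rw [symbolicPower, Submodule.mem_iInf]
    rintro ⟨P, hPmem⟩
    have hPp : P.IsPrime := hPmem.1.1
    have hIP : I ≤ P := hPmem.1.2
    -- the set of variables in P is a minimal vertex cover
    have hCcov : IsVertexCover (underGraph I)
        {k | (X k : MvPolynomial (Fin n) K) ∈ P} := by
      rintro k l ⟨hkl, b, hbmin, hbsupp⟩
      have hbI : (monomial b (1:K) : MvPolynomial (Fin n) K) ∈ P := hIP hbmin.1
      have hfactor : (monomial b (1:K) : MvPolynomial (Fin n) K)
          = X k ^ b k * X l ^ b l := by
        rw [monomial_eq, C_1, one_mul, Finsupp.prod, hbsupp, Finset.prod_pair hkl]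
      rw [hfactor] at hbI
      rcases hPp.mem_or_mem hbI with h | h
      · exact Or.inl (hPp.mem_of_pow_mem _ h)
      · exact Or.inr (hPp.mem_of_pow_mem _ h)
    have hCmin : IsMinimalVertexCover (underGraph I)
        {k | (X k : MvPolynomial (Fin n) K) ∈ P} := by
      refine ⟨hCcov, fun D hD hDcov => ?_⟩
      have hprime := aux_span_isPrime (K := K) D
      have hIle : I ≤ Ideal.span ((fun k => (X k : MvPolynomial (Fin n) K)) '' D) := by
        obtain ⟨A, hA⟩ := hmon
        rw [hA, Ideal.span_le]
        rintro _ ⟨c, hc, rfl⟩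
        have hcI : (monomial c (1:K) : MvPolynomial (Fin n) K) ∈ I := by
          rw [hA]; exact Ideal.subset_span ⟨c, hc, rfl⟩
        obtain ⟨b, hb, hbc⟩ := aux_exists_minGen hcI
        obtain ⟨k, l, hkl, hbsupp⟩ := Finset.card_eq_two.mp (h2 b hb)
        have hadj : (underGraph I).Adj k l := ⟨hkl, b, hb, hbsupp⟩
        have hmem : ∀ x, x ∈ ({k, l} : Finset (Fin n)) → x ∈ D →
            (monomial c (1:K) : MvPolynomial (Fin n) K)
              ∈ Ideal.span ((fun k => (X k : MvPolynomial (Fin n) K)) '' D) := by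
          intro x hx hxD
          refine aux_monomial_mem_of_X_mem ?_ (Ideal.subset_span ⟨x, hxD, rfl⟩)
          have hb1 : 1 ≤ b x := Nat.one_le_iff_ne_zero.mpr
            (Finsupp.mem_support_iff.mp (by rw [hbsupp]; exact hx))
          exact le_trans hb1 (Finsupp.le_def.mp hbc x)
        rcases hDcov hadj with h | h
        · exact hmem k (by simp) h
        · exact hmem l (by simp) h
      have hsub : Ideal.span ((fun k => (X k : MvPolynomial (Fin n) K)) '' D) ≤ P := by
        rw [Ideal.span_le]
        rintro _ ⟨k, hk, rfl⟩
        exact hD hk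
      have hPle := hPmem.2 ⟨hprime, hIle⟩ hsub
      refine subset_antisymm hD fun k hk => ?_
      exact (aux_X_mem_span_iff D k).mp (hPle hk)
    simp only [pow_one]
    rcases hcov _ hCmin with ⟨hiC, hjC⟩ | ⟨hjC, hiC⟩
    · -- i ∈ C, j ∉ C : use s = X j ^ (a j)
      refine aux_mem_localizedComponent hPp (s := X j ^ (a j)) ?_ ?_
      · intro hs
        exact hjC (hPp.mem_of_pow_mem _ hs)
      · rw [show (X j : MvPolynomial (Fin n) K) ^ (a j)
            = monomial (Finsupp.single j (a j)) 1 from X_pow_eq_monomial,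
          aux_monomial_mul]
        refine aux_mem_of_le ?_ ha.1.1
        rw [Finsupp.le_def]
        intro k
        by_cases hkj : k = j
        · subst hkj
          simp [Finsupp.single_apply]
        · by_cases hki : k = i
          · subst hki
            have h1 : Finsupp.single j (a j) k = 0 := by
              simp [Finsupp.single_apply, (Ne.symm hij)]
            simp only [Finsupp.add_apply, h1, zero_add, hmi]
            omega
          · have h0 : a k = 0 := Finsupp.notMem_support_iff.mp (by
              rw [ha.2]
              simp [hki, hkj])
            simp [h0]
    · -- j ∈ C, i ∉ C : use s = X i ^ (u i)
      refine aux_mem_localizedComponent hPp (s := X i ^ (u i)) ?_ ?_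
      · intro hs
        exact hiC (hPp.mem_of_pow_mem _ hs)
      · rw [show (X i : MvPolynomial (Fin n) K) ^ (u i)
            = monomial (Finsupp.single i (u i)) 1 from X_pow_eq_monomial,
          aux_monomial_mul]
        refine aux_mem_of_le ?_ hu.1
        rw [Finsupp.le_def]
        intro k
        by_cases hki : k = i
        · subst hki
          simp [Finsupp.single_apply]
        · have h1 : Finsupp.single i (u i) k = 0 := by
            simp [Finsupp.single_apply, Ne.symm hki]
          simp only [Finsupp.add_apply, h1, zero_add, hmk k hki, le_refl]
  intro heq
  rw [heq] at hms
  exact hmI hms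

end AuxProof

theorem stmt4 {K : Type*} [Field K] {n : ℕ} (I : Ideal (MvPolynomial (Fin n) K))
    (hmon : IsMonomialIdeal I) (h2 : IsSupportTwo I) (i j : Fin n)
    (hedge : (underGraph I).Adj i j)
    (hcov : ∀ C : Set (Fin n), IsMinimalVertexCover (underGraph I) C →
      Xor' (i ∈ C) (j ∈ C))
    (u : Fin n →₀ ℕ) (hu : u ∈ minGens I)
    (hdiv : nuExp I i j + 1 ≤ u i ∨ nuExp I j i + 1 ≤ u j) :
    symbolicPower I 1 ≠ I := by
  rcases hdiv with h | h
  · exact aux_key I hmon h2 i j hedge hcov u hu h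
  · exact aux_key I hmon h2 j i hedge.symm (fun C hC => (hcov C hC).symm) u hu h
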